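/- Let W : ℝ² → ℝ be differentiable, let S be a 2×2 real orthogonal matrix with det S = 1 (a rotation), let d ∈ ℝ², and define W'(v) = W(Sᵀ(v − d)). Suppose v ↦ ‖∇W(v)‖²/W(v) (taken to be 0 where W(v) = 0) is integrable. Then J_r(W') = J_r(W): the real part of the complex Fisher information is invariant under displacements and orthogonal symplectic transformations of phase space. -/

import Mathlib

open MeasureTheory Matrix

/-- The real part of the complex Fisher information,
`J_r(W) = ∫ ‖∇W‖²/W`, is invariant under displacements and rotations
(orthogonal symplectic transformations) of phase space. -/
theorem fisher_information_real_part_invariance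
    (W : EuclideanSpace ℝ (Fin 2) → ℝ) (hW : Differentiable ℝ W)
    (S : Matrix (Fin 2) (Fin 2) ℝ)
    (hSO : S * S.transpose = 1) (hSdet : S.det = 1)
    (d : EuclideanSpace ℝ (Fin 2))
    (W' : EuclideanSpace ℝ (Fin 2) → ℝ)
    (hW' : ∀ v, W' v = W (Matrix.toEuclideanLin S.transpose (v - d)))
    (hint : Integrable fun v => ‖gradient W v‖ ^ 2 / W v) :
    ∫ v, ‖gradient W' v‖ ^ 2 / W' v = ∫ v, ‖gradient W v‖ ^ 2 / W v := by
  have hnorm : ∀ x : EuclideanSpace ℝ (Fin 2),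
      ‖Matrix.toEuclideanLin S.transpose x‖ = ‖x‖ := by
    intro x
    have h : (inner ℝ (Matrix.toEuclideanLin S.transpose x)
        (Matrix.toEuclideanLin S.transpose x) : ℝ) = inner ℝ x x := by
      simp only [Matrix.toEuclideanLin_apply, PiLp.inner_apply, RCLike.inner_apply, conj_trivial]
      have : (S.transpose *ᵥ (WithLp.equiv 2 (Fin 2 → ℝ)) x) ⬝ᵥ
          (S.transpose *ᵥ (WithLp.equiv 2 (Fin 2 → ℝ)) x)
          = ((WithLp.equiv 2 (Fin 2 → ℝ)) x) ⬝ᵥ ((WithLp.equiv 2 (Fin 2 → ℝ)) x) := by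
        rw [Matrix.dotProduct_mulVec, Matrix.vecMul_transpose, Matrix.mulVec_mulVec, hSO,
          Matrix.one_mulVec]
      simpa [dotProduct, mul_comm] using this
    rw [real_inner_self_eq_norm_sq, real_inner_self_eq_norm_sq] at h
    exact (sq_eq_sq₀ (norm_nonneg _) (norm_nonneg _)).mp h
  -- linear isometry equivalence
  set li : EuclideanSpace ℝ (Fin 2) →ₗᵢ[ℝ] EuclideanSpace ℝ (Fin 2) :=
    ⟨Matrix.toEuclideanLin S.transpose, hnorm⟩ with hli
  set e := li.toLinearIsometryEquiv rfl with he
  have hWe : W' = fun v => W (e (v - d)) := funext hW'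
  -- gradient norm invariance
  have hgrad : ∀ v, ‖gradient W' v‖ = ‖gradient W (e (v - d))‖ := by
    intro v
    have h1 : HasFDerivAt (fun v : EuclideanSpace ℝ (Fin 2) => e (v - d))
        (e.toContinuousLinearEquiv : EuclideanSpace ℝ (Fin 2) →L[ℝ] EuclideanSpace ℝ (Fin 2)) v := by
      have h0 := (e.toContinuousLinearEquiv.toContinuousLinearMap).hasFDerivAt (x := v - d)
      have := h0.comp v ((hasFDerivAt_id v).sub_const d)
      rw [ContinuousLinearMap.comp_id] at this
      exact this
    have h2 := ((hW (e (v - d))).hasFDerivAt).comp v h1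
    have h3 : fderiv ℝ (fun v => W (e (v - d))) v
        = (fderiv ℝ W (e (v - d))).comp e.toContinuousLinearEquiv.toContinuousLinearMap :=
      h2.fderiv
    rw [hWe]
    rw [gradient, gradient, h3, LinearIsometryEquiv.norm_map, LinearIsometryEquiv.norm_map]
    exact ContinuousLinearMap.opNorm_comp_linearIsometryEquiv _ e
  calc ∫ v, ‖gradient W' v‖ ^ 2 / W' v
      = ∫ v, ‖gradient W (e (v - d))‖ ^ 2 / W (e (v - d)) := by
        refine integral_congr_ae (Filter.Eventually.of_forall fun v => ?_)
        dsimp only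
        rw [hgrad v, hW' v]; rfl
    _ = ∫ v, ‖gradient W (e v)‖ ^ 2 / W (e v) :=
        integral_sub_right_eq_self (fun v => ‖gradient W (e v)‖ ^ 2 / W (e v)) d
    _ = ∫ v, ‖gradient W v‖ ^ 2 / W v :=
        e.measurePreserving.integral_comp e.toHomeomorph.measurableEmbedding
          (fun v => ‖gradient W v‖ ^ 2 / W v)
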